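/- Let a ∈ (0,1) and let N ≥ 2 be an integer. Define h_a : [0,1] → ℝ by h_a(u) = a·u for u < a and h_a(u) = (1+a)·u − a for u ≥ a. Then ∫_0^1 h_a(u)^(N−1) du = (1 + a^(2N−1)) / (N·(1+a)). In particular, the two-draw contest's equilibrium condition is distribution-free: its round-1 indifference condition reduces to c/W = (1 + a^(2N−1))/(N·(1+a)) − a^(2N−2) for the acceptance quantile a = F(λ). -/

import Mathlib

open intervalIntegral

/-- In the two-draw contest with round-1 acceptance quantile `a`, an opponent's
final-score quantile CDF is `h_a(u) = a·u` for `u < a` and `(1+a)·u − a` for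
`u ≥ a`, and `∫_0^1 h_a(u)^(N−1) du = (1 + a^(2N−1))/(N·(1+a))`. In particular,
the round-1 indifference condition is distribution-free: it reduces to
`c/W = (1 + a^(2N−1))/(N·(1+a)) − a^(2N−2)`. -/
theorem stmt_6
    (a : ℝ) (ha : a ∈ Set.Ioo (0:ℝ) 1)
    (N : ℕ) (hN : 2 ≤ N)
    (h : ℝ → ℝ)
    (hdef : ∀ u : ℝ, h u = if u < a then a * u else (1 + a) * u - a) :
    (∫ u in (0:ℝ)..1, (h u) ^ (N - 1))
      = (1 + a ^ (2 * N - 1)) / (N * (1 + a)) ∧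
    ∀ c W : ℝ, 0 < W →
      ((W * a ^ (2 * (N - 1)) + c = W * ∫ u in (0:ℝ)..1, (h u) ^ (N - 1))
        ↔ c / W = (1 + a ^ (2 * N - 1)) / (N * (1 + a)) - a ^ (2 * N - 2)) := by
  obtain ⟨ha0, ha1⟩ := ha
  have hfun : h = fun u => if u < a then a * u else (1 + a) * u - a := funext hdef
  subst hfun
  obtain ⟨n, rfl⟩ : ∃ n, N = n + 1 := ⟨N - 1, by omega⟩
  have h1a : (1:ℝ) + a ≠ 0 := by linarith
  have heq : ∀ u : ℝ, (if u < a then a * u else (1 + a) * u - a)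
      = if u ≤ a then a * u else (1 + a) * u - a := by
    intro u
    rcases lt_trichotomy u a with hu | hu | hu
    · rw [if_pos hu, if_pos hu.le]
    · subst hu; rw [if_neg (lt_irrefl u), if_pos le_rfl]; ring
    · rw [if_neg (not_lt.mpr hu.le), if_neg (not_le.mpr hu)]
  have hcont : Continuous fun u : ℝ => (if u < a then a * u else (1 + a) * u - a) ^ n := by
    simp only [heq]
    apply Continuous.pow
    exact Continuous.if_le (continuous_const.mul continuous_id) (by fun_prop)
      continuous_id continuous_const (by intro x hx; subst hx; ring)
  have key : (∫ u in (0:ℝ)..1,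
        ((fun u => if u < a then a * u else (1 + a) * u - a) u) ^ (n + 1 - 1))
      = (1 + a ^ (2 * (n + 1) - 1)) / ((n + 1 : ℕ) * (1 + a)) := by
    simp only [Nat.add_sub_cancel]
    rw [← intervalIntegral.integral_add_adjacent_intervals
        (hcont.intervalIntegrable 0 a) (hcont.intervalIntegrable a 1)]
    have hae : ∀ᵐ x : ℝ, x ≠ a := by
      rw [MeasureTheory.ae_iff]
      simpa using MeasureTheory.measure_singleton (a := a) (μ := MeasureTheory.volume)
    have e1 : (∫ u in (0:ℝ)..a, (if u < a then a * u else (1 + a) * u - a) ^ n)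
        = ∫ u in (0:ℝ)..a, (a * u) ^ n := by
      apply intervalIntegral.integral_congr_ae
      filter_upwards [hae] with x hx hmem
      rw [Set.uIoc_of_le ha0.le] at hmem
      rw [if_pos (lt_of_le_of_ne hmem.2 hx)]
    have e2 : (∫ u in a..(1:ℝ), (if u < a then a * u else (1 + a) * u - a) ^ n)
        = ∫ u in a..(1:ℝ), ((1 + a) * u - a) ^ n := by
      apply intervalIntegral.integral_congr
      intro x hx
      rw [Set.uIcc_of_le ha1.le] at hx
      simp [not_lt.mpr hx.1]
    rw [e1, e2]
    have c1 : (∫ u in (0:ℝ)..a, (a * u) ^ n) = a ^ n * ((a ^ (n+1) - 0 ^ (n+1)) / (n+1)) := by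
      simp only [mul_pow]
      rw [intervalIntegral.integral_const_mul, integral_pow]
    have hderiv : ∀ u ∈ Set.uIcc a (1:ℝ),
        HasDerivAt (fun u => ((1 + a) * u - a) ^ (n+1) / ((n+1) * (1 + a)))
          (((1 + a) * u - a) ^ n) u := by
      intro u _
      have h1 : HasDerivAt (fun u : ℝ => (1 + a) * u - a) (1 + a) u := by
        simpa using ((hasDerivAt_id u).const_mul (1 + a)).sub_const a
      have h2 := (h1.pow (n + 1)).div_const ((n + 1) * (1 + a))
      refine h2.congr_deriv ?_
      rw [Nat.add_sub_cancel]; push_cast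
      have hne : ((n : ℝ) + 1) ≠ 0 := by positivity
      field_simp
    have c2 : (∫ u in a..(1:ℝ), ((1 + a) * u - a) ^ n)
        = ((1 + a) * 1 - a) ^ (n+1) / ((n+1) * (1 + a))
          - ((1 + a) * a - a) ^ (n+1) / ((n+1) * (1 + a)) := by
      refine intervalIntegral.integral_eq_sub_of_hasDerivAt hderiv ?_
      exact ((continuous_const.mul continuous_id).sub continuous_const).pow n
        |>.intervalIntegrable a 1
    rw [c1, c2]
    have hbase : (1 + a) * a - a = a ^ 2 := by ring
    rw [hbase, ← pow_mul]
    have he1 : 2 * (n + 1) - 1 = 2 * n + 1 := by omega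
    rw [he1]
    have hne : ((n : ℝ) + 1) ≠ 0 := by positivity
    push_cast
    field_simp
    ring
  refine ⟨key, ?_⟩
  intro c W hW
  rw [key]
  have he2 : 2 * (n + 1) - 2 = 2 * (n + 1 - 1) := by omega
  rw [he2, div_eq_iff hW.ne']
  constructor <;> intro hh <;> linear_combination hh
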